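/- Fundamental theorem on Young measures, lower semicontinuity part: Let u_h : D → S be a sequence of measurable functions generating a Young measure μ = (μ_x)_{x∈D} and satisfying the tightness condition. If f : D × S → [0, +∞) is measurable with respect to the product of the Lebesgue σ-algebra on D and the Borel σ-algebra on S, and f(x, ·) is continuous on S for every x ∈ D, then liminf_{h→∞} ∫_D f(x, u_h(x)) dx ≥ ∫_D f̄(x) dx, where f̄(x) := ∫_S f(x, z) dμ_x(z). -/

import Mathlib

open MeasureTheory Filter Topology
open scoped ENNReal ZeroAtInfty

variable {l : ℕ} {S : Type*} [MetricSpace S] [CompleteSpace S]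
  [TopologicalSpace.SeparableSpace S] [LocallyCompactSpace S]
  [MeasurableSpace S] [BorelSpace S]

/-- `μ = (μ_x)_{x∈D}` is the Young measure generated by the sequence `u_h : D → S`. -/
def GeneratesYoung (D : Set (Fin l → ℝ)) (u : ℕ → (Fin l → ℝ) → S)
    (μ : (Fin l → ℝ) → Measure S) : Prop :=
  (∀ x, IsProbabilityMeasure (μ x)) ∧
  (∀ g : C₀(S, ℝ), AEMeasurable (fun x => ∫ z, g z ∂(μ x)) (volume.restrict D)) ∧
  ∀ φ : (Fin l → ℝ) → ℝ, IntegrableOn φ D →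
    ∀ g : C₀(S, ℝ),
      Tendsto (fun h => ∫ x in D, φ x * g (u h x)) atTop
        (𝓝 (∫ x in D, φ x * ∫ z, g z ∂(μ x)))

/-- The sequence `u_h` satisfies the tightness condition on `D`. -/
def TightSeq (D : Set (Fin l → ℝ)) (u : ℕ → (Fin l → ℝ) → S) : Prop :=
  ∀ δ > (0 : ℝ), ∃ K : Set S, IsCompact K ∧
    ∀ h, volume {x ∈ D | u h x ∉ K} ≤ ENNReal.ofReal δ

theorem exists_approx_family (S : Type*) [MetricSpace S]
    [TopologicalSpace.SeparableSpace S] [LocallyCompactSpace S] [Nonempty S] :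
    ∃ G : ℕ → C₀(S, ℝ), (∀ n z, 0 ≤ G n z) ∧
      ∀ φ : S → ℝ, Continuous φ → (∀ z, 0 ≤ φ z) → ∀ z : S,
        ENNReal.ofReal (φ z)
          = ⨆ n, ⨆ (_ : ∀ w, G n w ≤ φ w), ENNReal.ofReal (G n z) := by
  classical
  set c : ℕ → S := TopologicalSpace.denseSeq S with hc
  -- bump functions
  have mkbump : ∀ (p : S) (r R a : ℝ), 0 < r → r < R → 0 ≤ a →
      IsCompact (Metric.closedBall p R) →
      ∃ g : C₀(S, ℝ), (∀ z, 0 ≤ g z) ∧ (∀ z, g z ≤ a) ∧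
        (∀ z, dist z p ≤ r → g z = a) ∧ (∀ z, R < dist z p → g z = 0) := by
    intro p r R a hr hrR ha hcomp
    have hRr : 0 < R - r := by linarith
    set t : S → ℝ := fun z => a * max 0 (min 1 ((R - dist z p) / (R - r))) with ht
    have ht0 : ∀ z, 0 ≤ t z := fun z => by
      have : (0:ℝ) ≤ max 0 (min 1 ((R - dist z p) / (R - r))) := le_max_left _ _
      positivity
    have hta : ∀ z, t z ≤ a := by
      intro z
      have h1 : max 0 (min 1 ((R - dist z p) / (R - r))) ≤ 1 :=
        max_le zero_le_one (min_le_left _ _)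
      calc t z ≤ a * 1 := by
            apply mul_le_mul_of_nonneg_left h1 ha
        _ = a := mul_one a
    have htr : ∀ z, dist z p ≤ r → t z = a := by
      intro z hz
      have h1 : (1:ℝ) ≤ (R - dist z p) / (R - r) := by
        rw [le_div_iff₀ hRr]; linarith
      simp [ht, min_eq_left h1, max_eq_right zero_le_one]
    have htR : ∀ z, R < dist z p → t z = 0 := by
      intro z hz
      have h1 : (R - dist z p) / (R - r) ≤ 0 := by
        apply div_nonpos_of_nonpos_of_nonneg <;> linarith
      have h2 : min 1 ((R - dist z p) / (R - r)) ≤ 0 := le_trans (min_le_right _ _) h1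
      simp [ht, max_eq_left h2]
    have htc : Continuous t := by
      apply Continuous.mul continuous_const
      exact (continuous_const.max (continuous_const.min
        (((continuous_const.sub (continuous_id.dist continuous_const)).div_const _))))
    have htz : Tendsto t (Filter.cocompact S) (𝓝 0) := by
      apply Tendsto.congr' _ tendsto_const_nhds
      have : Metric.closedBall p R ∈ {K : Set S | IsCompact K} := hcomp
      filter_upwards [Filter.mem_cocompact.2 ⟨Metric.closedBall p R, hcomp,
        fun z hz => by
          simp only [Set.mem_compl_iff, Metric.mem_closedBall, not_le] at hz
          exact (htR z hz).symm⟩] with z hz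
      exact hz
    exact ⟨⟨⟨t, htc⟩, htz⟩, ht0, hta, htr, htR⟩
  -- indexed family
  have hfam : ∀ i : ℕ × ℚ × ℚ × ℚ, ∃ g : C₀(S, ℝ), (∀ z, 0 ≤ g z) ∧
      (((0:ℝ) < (i.2.1:ℝ) ∧ ((i.2.1:ℝ) < (i.2.2.1:ℝ)) ∧ (0:ℝ) ≤ (i.2.2.2:ℝ) ∧
          IsCompact (Metric.closedBall (c i.1) (i.2.2.1:ℝ))) →
        (∀ z, g z ≤ (i.2.2.2:ℝ)) ∧ (∀ z, dist z (c i.1) ≤ (i.2.1:ℝ) → g z = (i.2.2.2:ℝ)) ∧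
          (∀ z, ((i.2.2.1:ℝ)) < dist z (c i.1) → g z = 0)) ∧
      (¬ ((0:ℝ) < (i.2.1:ℝ) ∧ ((i.2.1:ℝ) < (i.2.2.1:ℝ)) ∧ (0:ℝ) ≤ (i.2.2.2:ℝ) ∧
          IsCompact (Metric.closedBall (c i.1) (i.2.2.1:ℝ))) → g = 0) := by
    intro i
    by_cases h : ((0:ℝ) < (i.2.1:ℝ) ∧ ((i.2.1:ℝ) < (i.2.2.1:ℝ)) ∧ (0:ℝ) ≤ (i.2.2.2:ℝ) ∧
        IsCompact (Metric.closedBall (c i.1) (i.2.2.1:ℝ)))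
    · obtain ⟨g, h0, h1, h2, h3⟩ := mkbump (c i.1) _ _ _ h.1 h.2.1 h.2.2.1 h.2.2.2
      exact ⟨g, h0, fun _ => ⟨h1, h2, h3⟩, fun h' => absurd h h'⟩
    · exact ⟨0, fun z => le_refl 0, fun h' => absurd h' h, fun _ => rfl⟩
  choose F hF0 hFval hFinv using hfam
  set e := Denumerable.eqv (ℕ × ℚ × ℚ × ℚ) with he
  refine ⟨fun n => F (e.symm n), fun n z => hF0 _ z, ?_⟩
  intro φ hφc hφ0 z
  apply le_antisymm
  · -- hard direction
    rcases eq_top_or_lt_top (⨆ n, ⨆ (_ : ∀ w, (F (e.symm n)) w ≤ φ w),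
        ENNReal.ofReal ((F (e.symm n)) z)) with htop | hlt
    · rw [htop]; exact le_top
    apply ENNReal.le_of_forall_pos_le_add
    intro ε hε _
    -- find n with F (e.symm n) ≤ φ and φ z - ε ≤ F (e.symm n) z
    have key : ∃ n, (∀ w, (F (e.symm n)) w ≤ φ w) ∧ φ z - (ε:ℝ) ≤ (F (e.symm n)) z := by
      by_cases hz : φ z ≤ (ε:ℝ)
      · refine ⟨e (0, 0, 0, 0), ?_, ?_⟩
        · rw [Equiv.symm_apply_apply]
          have : F (0, 0, 0, 0) = 0 := hFinv _ (by norm_num)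
          rw [this]; intro w; simpa using hφ0 w
        · rw [Equiv.symm_apply_apply]
          have : F (0, 0, 0, 0) = 0 := hFinv _ (by norm_num)
          rw [this]; simp; linarith
      push_neg at hz
      have hεpos : (0:ℝ) < (ε:ℝ) := hε
      -- compact neighborhood
      obtain ⟨K, hKc, hKn⟩ := exists_compact_mem_nhds z
      obtain ⟨δ₀, hδ₀, hball₀⟩ := Metric.mem_nhds_iff.1 hKn
      obtain ⟨δ₁, hδ₁, hball₁⟩ := Metric.continuousAt_iff.1 (hφc.continuousAt (x := z)) ((ε:ℝ)/2) (by linarith)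
      set δ : ℝ := (min δ₀ δ₁) / 2 with hδdef
      have hδ : 0 < δ := by positivity
      obtain ⟨k, hk0⟩ := (Metric.denseRange_iff.1 (TopologicalSpace.denseRange_denseSeq S)) z (δ/4) (by positivity)
      have hk : dist z (c k) < δ/4 := by rw [hc]; exact hk0
      have hk' : dist (c k) z < δ/4 := by rw [dist_comm] at hk; exact hk
      obtain ⟨r, hr1, hr2⟩ := exists_rat_btwn (show δ/4 < δ/2 by linarith)
      obtain ⟨R, hR1, hR2⟩ := exists_rat_btwn (show δ/2 < δ by linarith)
      obtain ⟨a, ha1, ha2⟩ := exists_rat_btwn (show φ z - (ε:ℝ) < φ z - (ε:ℝ)/2 by linarith)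
      have hrpos : (0:ℝ) < (r:ℝ) := by linarith
      have hrR : (r:ℝ) < (R:ℝ) := by linarith
      have hapos : (0:ℝ) ≤ (a:ℝ) := by linarith
      have hsub : Metric.closedBall (c k) (R:ℝ) ⊆ Metric.ball z δ₀ := by
        intro w hw
        simp only [Metric.mem_closedBall] at hw
        have : dist w z ≤ dist w (c k) + dist (c k) z := dist_triangle _ _ _
        have hδle : δ ≤ δ₀ / 2 := by
          rw [hδdef]; have := min_le_left δ₀ δ₁; linarith
        simp only [Metric.mem_ball]
        calc dist w z ≤ (R:ℝ) + δ/4 := by linarith [hk']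
          _ < δ + δ/4 := by linarith
          _ ≤ δ₀/2 + δ₀/8 := by linarith [hδle]
          _ < δ₀ := by linarith
      have hcomp : IsCompact (Metric.closedBall (c k) (R:ℝ)) :=
        hKc.of_isClosed_subset Metric.isClosed_closedBall (hsub.trans hball₀)
      have hφball : ∀ w ∈ Metric.closedBall (c k) (R:ℝ), φ z - (ε:ℝ)/2 < φ w := by
        intro w hw
        have hwz : dist w z < δ₁ := by
          have h1 := hsub hw
          simp only [Metric.mem_ball] at h1
          have hδle : δ ≤ δ₁ / 2 := by
            rw [hδdef]; have := min_le_right δ₀ δ₁; linarith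
          simp only [Metric.mem_closedBall] at hw
          have : dist w z ≤ dist w (c k) + dist (c k) z := dist_triangle _ _ _
          calc dist w z ≤ (R:ℝ) + δ/4 := by linarith [hk']
            _ < δ + δ/4 := by linarith
            _ ≤ δ₁/2 + δ₁/8 := by linarith [hδle]
            _ < δ₁ := by linarith
        have := hball₁ hwz
        have := abs_lt.1 (Real.dist_eq (φ w) (φ z) ▸ this)
        linarith [this.1]
      have hcond : ((0:ℝ) < ((r:ℚ):ℝ) ∧ (((r:ℚ):ℝ) < ((R:ℚ):ℝ)) ∧ (0:ℝ) ≤ ((a:ℚ):ℝ) ∧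
          IsCompact (Metric.closedBall (c k) ((R:ℚ):ℝ))) := ⟨hrpos, hrR, hapos, hcomp⟩
      obtain ⟨hle, heq, -⟩ := hFval (k, r, R, a) hcond
      refine ⟨e (k, r, R, a), ?_, ?_⟩
      · rw [Equiv.symm_apply_apply]
        intro w
        by_cases hw : dist w (c k) ≤ (R:ℝ)
        · have h1 : φ z - (ε:ℝ)/2 < φ w := hφball w (Metric.mem_closedBall.2 hw)
          calc F (k, r, R, a) w ≤ (a:ℝ) := hle w
            _ ≤ φ z - (ε:ℝ)/2 := le_of_lt ha2
            _ ≤ φ w := le_of_lt h1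
        · push_neg at hw
          obtain ⟨-, -, hzero⟩ := hFval (k, r, R, a) hcond
          rw [hzero w hw]; exact hφ0 w
      · rw [Equiv.symm_apply_apply]
        have hzk : dist z (c k) ≤ (r:ℝ) := by
          linarith [hk]
        rw [heq z hzk]; linarith
    obtain ⟨n, hn1, hn2⟩ := key
    calc ENNReal.ofReal (φ z) ≤ ENNReal.ofReal ((F (e.symm n)) z + (ε:ℝ)) := by
          apply ENNReal.ofReal_le_ofReal; linarith
      _ = ENNReal.ofReal ((F (e.symm n)) z) + ENNReal.ofReal (ε:ℝ) :=
          ENNReal.ofReal_add (hF0 _ z) (le_of_lt hε)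
      _ ≤ (⨆ n, ⨆ (_ : ∀ w, (F (e.symm n)) w ≤ φ w), ENNReal.ofReal ((F (e.symm n)) z)) + ε := by
          gcongr
          · exact le_iSup₂_of_le n hn1 (le_refl _)
          · exact ENNReal.ofReal_coe_nnreal.le
  · apply iSup₂_le
    intro n hn
    exact ENNReal.ofReal_le_ofReal (hn z)

theorem exists_gmax (S : Type*) [MetricSpace S] (G : ℕ → C₀(S, ℝ))
    (hG : ∀ n z, 0 ≤ G n z) :
    ∃ M : Finset ℕ → C₀(S, ℝ),
      (∀ σ z, 0 ≤ M σ z) ∧ (∀ σ n, n ∈ σ → ∀ z, G n z ≤ M σ z) ∧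
      (∀ σ z b, 0 ≤ b → (∀ n ∈ σ, G n z ≤ b) → M σ z ≤ b) := by
  classical
  set Gc : ℕ → C(S, ℝ) := fun n => (G n).toContinuousMap with hGc
  set mc : Finset ℕ → C(S, ℝ) := fun σ => Finset.fold (β := C(S,ℝ)) (· ⊔ ·) 0 Gc σ with hmc
  have happ : ∀ σ (z : S), mc σ z = Finset.fold (β := ℝ) (· ⊔ ·) 0 (fun n => G n z) σ := by
    intro σ z
    induction σ using Finset.induction_on with
    | empty => simp [hmc]
    | @insert a s h ih =>
      simp only [hmc] at ih ⊢
      rw [Finset.fold_insert h, Finset.fold_insert h, ← ih]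
      rfl
  -- real-level facts by induction
  have h0 : ∀ (σ : Finset ℕ) (z : S), 0 ≤ σ.fold (· ⊔ ·) (0:ℝ) (fun n => G n z) := by
    intro σ z
    induction σ using Finset.induction_on with
    | empty => simp
    | insert _ _ h ih => rw [Finset.fold_insert h]; exact le_trans ih (le_max_right _ _)
  have h1 : ∀ (σ : Finset ℕ) n, n ∈ σ → ∀ (z : S), G n z ≤ σ.fold (· ⊔ ·) (0:ℝ) (fun m => G m z) := by
    intro σ n hn z
    induction σ using Finset.induction_on with
    | empty => simp at hn
    | @insert a s h ih =>
      rw [Finset.fold_insert h]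
      rcases Finset.mem_insert.1 hn with rfl | hn'
      · exact le_max_left _ _
      · exact le_trans (ih hn') (le_max_right _ _)
  have h2 : ∀ (σ : Finset ℕ) (z : S) (b : ℝ), 0 ≤ b → (∀ n ∈ σ, G n z ≤ b) →
      σ.fold (· ⊔ ·) (0:ℝ) (fun m => G m z) ≤ b := by
    intro σ z b hb hball
    induction σ using Finset.induction_on with
    | empty => simpa
    | @insert a s h ih =>
      rw [Finset.fold_insert h]
      exact max_le (hball a (Finset.mem_insert_self a s))
        (ih fun n hn => hball n (Finset.mem_insert_of_mem hn))
  have hsum : ∀ (σ : Finset ℕ) (z : S), σ.fold (· ⊔ ·) (0:ℝ) (fun m => G m z) ≤ ∑ n ∈ σ, G n z := by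
    intro σ z
    induction σ using Finset.induction_on with
    | empty => simp
    | @insert a s h ih =>
      rw [Finset.fold_insert h, Finset.sum_insert h]
      apply max_le
      · have : (0:ℝ) ≤ ∑ n ∈ s, G n z := Finset.sum_nonneg fun n _ => hG n z
        linarith [hG a z]
      · linarith [hG a z]
  have hz : ∀ σ, Tendsto (fun z => mc σ z) (Filter.cocompact S) (𝓝 0) := by
    intro σ
    have hb : Tendsto (fun z => ∑ n ∈ σ, G n z) (Filter.cocompact S) (𝓝 0) := by
      have := tendsto_finset_sum σ (fun n _ => (G n).zero_at_infty')
      simpa using this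
    apply squeeze_zero (fun z => by rw [happ]; exact h0 σ z) (fun z => by rw [happ]; exact hsum σ z) hb
  refine ⟨fun σ => ⟨mc σ, hz σ⟩, ?_, ?_, ?_⟩
  · intro σ z; show 0 ≤ mc σ z; rw [happ]; exact h0 σ z
  · intro σ n hn z; show G n z ≤ mc σ z; rw [happ]; exact h1 σ n hn z
  · intro σ z b hb hball; show mc σ z ≤ b; rw [happ]; exact h2 σ z b hb hball

/-- **Fundamental theorem on Young measures, lower semicontinuity part**: for a
nonnegative Carathéodory integrand `f`,
`liminf_h ∫_D f(x, u_h(x)) dx ≥ ∫_D ∫_S f(x,z) dμ_x(z) dx`. -/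
theorem statement13
    (l : ℕ) (hl : 0 < l) (S : Type*) [MetricSpace S] [CompleteSpace S]
    [TopologicalSpace.SeparableSpace S] [LocallyCompactSpace S]
    [MeasurableSpace S] [BorelSpace S]
    (D : Set (Fin l → ℝ)) (hDm : MeasurableSet D) (hDb : Bornology.IsBounded D)
    (u : ℕ → (Fin l → ℝ) → S) (hu : ∀ h, AEMeasurable (u h) (volume.restrict D))
    (μ : (Fin l → ℝ) → Measure S)
    (hgen : GeneratesYoung D u μ) (htight : TightSeq D u)
    (f : (Fin l → ℝ) → S → ℝ)
    (hf0 : ∀ x ∈ D, ∀ z, 0 ≤ f x z)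
    (hfc : ∀ x ∈ D, Continuous (f x))
    (hfm : ∀ z, AEMeasurable (fun x => f x z) (volume.restrict D)) :
    (∫⁻ x in D, ∫⁻ z, ENNReal.ofReal (f x z) ∂(μ x)) ≤
      Filter.liminf (fun h => ∫⁻ x in D, ENNReal.ofReal (f x (u h x))) atTop := by
  classical
  obtain ⟨hprob, hmeas2, hconv⟩ := hgen
  haveI hprob' : ∀ x, IsProbabilityMeasure (μ x) := hprob
  -- S is nonempty
  have hSne : Nonempty S := by
    by_contra h
    rw [not_nonempty_iff] at h
    have h1 := (hprob 0).measure_univ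
    rw [Set.univ_eq_empty_iff.2 h, measure_empty] at h1
    exact zero_ne_one h1
  have hDfin : volume D < ⊤ := hDb.measure_lt_top
  obtain ⟨G, hG0, hGapp⟩ := exists_approx_family S
  obtain ⟨M, hM0, hMge, hMle⟩ := exists_gmax S G hG0
  set c : ℕ → S := TopologicalSpace.denseSeq S with hc
  -- measurable versions of x ↦ f x (c k)
  set fk : ℕ → (Fin l → ℝ) → ℝ := fun k => (hfm (c k)).mk _ with hfk
  have hfkm : ∀ k, Measurable (fk k) := fun k => (hfm (c k)).measurable_mk
  have hfkae : ∀ᵐ x ∂(volume.restrict D), ∀ k, fk k x = f x (c k) := by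
    rw [ae_all_iff]; intro k; exact ((hfm (c k)).ae_eq_mk).symm
  set A : ℕ → Set (Fin l → ℝ) := fun n => {x | ∀ k, G n (c k) ≤ fk k x} with hA
  have hAm : ∀ n, MeasurableSet (A n) := by
    intro n
    have : A n = ⋂ k, (fk k) ⁻¹' (Set.Ici (G n (c k))) := by
      ext x; simp [hA, Set.mem_iInter]
    rw [this]; exact MeasurableSet.iInter fun k => (hfkm k) measurableSet_Ici
  -- key equivalence on good points
  have hkey : ∀ x, x ∈ D → (∀ k, fk k x = f x (c k)) → ∀ n,
      (x ∈ A n ↔ ∀ w, G n w ≤ f x w) := by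
    intro x hxD hx n
    constructor
    · intro hxA w
      have hcl : IsClosed {w : S | G n w ≤ f x w} :=
        isClosed_le (G n).continuous (hfc x hxD)
      have hsub : Set.range c ⊆ {w : S | G n w ≤ f x w} := by
        rintro _ ⟨k, rfl⟩
        have := hxA k
        rw [hx k] at this
        exact this
      have hwcl : w ∈ closure (Set.range c) := by
        have hd : Dense (Set.range c) := TopologicalSpace.denseRange_denseSeq S
        exact hd w
      exact hcl.closure_subset_iff.2 hsub hwcl
    · intro h k; rw [hx k]; exact h (c k)
  -- the pattern function
  set pat : ℕ → (Fin l → ℝ) → Finset ℕ :=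
    fun N x => (Finset.range N).filter (fun n => x ∈ A n) with hpat
  have hpatmem : ∀ N x n, n ∈ pat N x ↔ n < N ∧ x ∈ A n := by
    intro N x n; simp [hpat, Finset.mem_filter, Finset.mem_range]
  have hpatsub : ∀ N x, pat N x ⊆ Finset.range N := fun N x => Finset.filter_subset _ _
  have hpatmono : ∀ x, Monotone (fun N => pat N x) := by
    intro x N N' hNN' n hn
    rw [hpatmem] at hn ⊢
    exact ⟨lt_of_lt_of_le hn.1 hNN', hn.2⟩
  have hMmono : ∀ σ τ : Finset ℕ, σ ⊆ τ → ∀ z, M σ z ≤ M τ z := by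
    intro σ τ h z
    exact hMle σ z _ (hM0 τ z) (fun n hn => hMge τ n (h hn) z)
  -- the partition sets
  set DS : ℕ → Finset ℕ → Set (Fin l → ℝ) := fun N σ => {x | pat N x = σ} with hDS
  have hDSm : ∀ N σ, MeasurableSet (DS N σ) := by
    intro N σ
    by_cases hσ : σ ⊆ Finset.range N
    · have heq : DS N σ = ⋂ n ∈ Finset.range N,
          (if n ∈ σ then A n else (A n)ᶜ) := by
        ext x
        simp only [hDS, Set.mem_setOf_eq, Set.mem_iInter]
        constructor
        · intro h n hn
          by_cases hnσ : n ∈ σ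
          · rw [if_pos hnσ]
            rw [← h, hpatmem] at hnσ
            exact hnσ.2
          · rw [if_neg hnσ]
            intro hxA
            exact hnσ (h ▸ (hpatmem N x n).2 ⟨Finset.mem_range.1 hn, hxA⟩)
        · intro h
          apply Finset.ext
          intro n
          rw [hpatmem]
          constructor
          · rintro ⟨hn1, hn2⟩
            have := h n (Finset.mem_range.2 hn1)
            by_cases hnσ : n ∈ σ
            · exact hnσ
            · rw [if_neg hnσ] at this; exact absurd hn2 this
          · intro hnσ
            have hn1 : n < N := Finset.mem_range.1 (hσ hnσ)
            have := h n (Finset.mem_range.2 hn1)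
            rw [if_pos hnσ] at this
            exact ⟨hn1, this⟩
      rw [heq]
      apply MeasurableSet.biInter (Finset.range N).countable_toSet
      intro n _
      by_cases hnσ : n ∈ σ
      · rw [if_pos hnσ]; exact hAm n
      · rw [if_neg hnσ]; exact (hAm n).compl
    · have heq : DS N σ = ∅ := by
        ext x
        simp only [hDS, Set.mem_setOf_eq, Set.mem_empty_iff_false, iff_false]
        intro h
        exact hσ (h ▸ hpatsub N x)
      rw [heq]; exact MeasurableSet.empty
  -- integrability of M σ against each μ x
  have hMint : ∀ (σ : Finset ℕ) x, Integrable (fun z => M σ z) (μ x) := by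
    intro σ x
    exact (M σ).toBCF.integrable (μ x)
  have hMnn : ∀ (σ : Finset ℕ) x, (0:ℝ) ≤ ∫ z, M σ z ∂(μ x) :=
    fun σ x => integral_nonneg (fun z => hM0 σ z)
  -- Jc σ x = ∫⁻ ofReal (M σ) dμ x
  set Jc : Finset ℕ → (Fin l → ℝ) → ℝ≥0∞ :=
    fun σ x => ∫⁻ z, ENNReal.ofReal (M σ z) ∂(μ x) with hJc
  have hJceq : ∀ σ x, Jc σ x = ENNReal.ofReal (∫ z, M σ z ∂(μ x)) := by
    intro σ x
    rw [hJc]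
    exact (ofReal_integral_eq_lintegral_ofReal (hMint σ x)
      (Filter.Eventually.of_forall (fun z => hM0 σ z))).symm
  have hJcm : ∀ σ, AEMeasurable (Jc σ) (volume.restrict D) := by
    intro σ
    have : Jc σ = fun x => ENNReal.ofReal (∫ z, M σ z ∂(μ x)) := funext (hJceq σ)
    rw [this]
    exact ENNReal.measurable_ofReal.comp_aemeasurable (hmeas2 (M σ))
  -- decomposition lemma
  have hdecomp : ∀ N (g : Finset ℕ → (Fin l → ℝ) → ℝ≥0∞) x,
      g (pat N x) x = ∑ σ ∈ (Finset.range N).powerset, (DS N σ).indicator (g σ) x := by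
    intro N g x
    rw [Finset.sum_eq_single_of_mem (pat N x)
      (Finset.mem_powerset.2 (hpatsub N x))]
    · rw [Set.indicator_of_mem]
      exact rfl
    · intro σ hσ hne
      rw [Set.indicator_of_notMem]
      intro hmem
      exact hne hmem.symm
  -- the approximating integrals
  set J : ℕ → (Fin l → ℝ) → ℝ≥0∞ := fun N x => Jc (pat N x) x with hJ
  have hJm : ∀ N, AEMeasurable (J N) (volume.restrict D) := by
    intro N
    have : J N = fun x => ∑ σ ∈ (Finset.range N).powerset, (DS N σ).indicator (Jc σ) x :=
      funext (fun x => hdecomp N Jc x)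
    rw [this]
    exact Finset.aemeasurable_fun_sum _ (fun σ _ => (hJcm σ).indicator (hDSm N σ))
  have hJmono : ∀ x, Monotone (fun N => J N x) := by
    intro x N N' hNN'
    exact lintegral_mono (fun z => ENNReal.ofReal_le_ofReal
      (hMmono _ _ (hpatmono x hNN') z))
  -- pointwise supremum identity on good points
  have hsup : ∀ x, x ∈ D → (∀ k, fk k x = f x (c k)) → ∀ z,
      ENNReal.ofReal (f x z) = ⨆ N, ENNReal.ofReal (M (pat N x) z) := by
    intro x hx hfx z
    apply le_antisymm
    · rw [hGapp (f x) (hfc x hx) (hf0 x hx) z]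
      apply iSup_le; intro n
      apply iSup_le; intro hn
      have hxA : x ∈ A n := (hkey x hx hfx n).2 hn
      have hmem : n ∈ pat (n+1) x := (hpatmem (n+1) x n).2 ⟨Nat.lt_succ_self n, hxA⟩
      calc ENNReal.ofReal (G n z) ≤ ENNReal.ofReal (M (pat (n+1) x) z) :=
            ENNReal.ofReal_le_ofReal (hMge _ n hmem z)
        _ ≤ ⨆ N, ENNReal.ofReal (M (pat N x) z) :=
            le_iSup (fun N => ENNReal.ofReal (M (pat N x) z)) (n+1)
    · apply iSup_le; intro N
      apply ENNReal.ofReal_le_ofReal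
      apply hMle (pat N x) z _ (hf0 x hx z)
      intro n hn
      have hxA : x ∈ A n := ((hpatmem N x n).1 hn).2
      exact (hkey x hx hfx n).1 hxA z
  -- same bound composed with u h
  have hcomp_le : ∀ N h', ∀ᵐ x ∂(volume.restrict D),
      ENNReal.ofReal (M (pat N x) (u h' x)) ≤ ENNReal.ofReal (f x (u h' x)) := by
    intro N h'
    filter_upwards [hfkae, ae_restrict_mem hDm] with x hx1 hx2
    apply ENNReal.ofReal_le_ofReal
    apply hMle (pat N x) _ _ (hf0 x hx2 _)
    intro n hn
    exact (hkey x hx2 hx1 n).1 ((hpatmem N x n).1 hn).2 _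
  -- Step 1+2: LHS = ⨆ N, ∫⁻ J N
  have step12 : (∫⁻ x in D, ∫⁻ z, ENNReal.ofReal (f x z) ∂(μ x))
      = ⨆ N, ∫⁻ x in D, J N x := by
    have e1 : (∫⁻ x in D, ∫⁻ z, ENNReal.ofReal (f x z) ∂(μ x))
        = ∫⁻ x in D, ⨆ N, J N x := by
      apply lintegral_congr_ae
      filter_upwards [hfkae, ae_restrict_mem hDm] with x hx1 hx2
      have e2 : (∫⁻ z, ENNReal.ofReal (f x z) ∂(μ x))
          = ∫⁻ z, ⨆ N, ENNReal.ofReal (M (pat N x) z) ∂(μ x) :=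
        lintegral_congr (fun z => hsup x hx2 hx1 z)
      rw [e2]
      rw [lintegral_iSup]
      · intro N
        exact ENNReal.measurable_ofReal.comp (M (pat N x)).continuous.measurable
      · intro N N' hNN' z
        exact ENNReal.ofReal_le_ofReal (hMmono _ _ (hpatmono x hNN') z)
    rw [e1]
    exact lintegral_iSup' hJm (Filter.Eventually.of_forall hJmono)
  rw [step12]
  apply iSup_le
  intro N
  -- Step 3: ∫⁻ J N ≤ liminf
  -- the indicator test functions
  set φ : Finset ℕ → (Fin l → ℝ) → ℝ := fun σ => (DS N σ).indicator (fun _ => (1:ℝ)) with hφ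
  have hφm : ∀ σ, Measurable (φ σ) := fun σ =>
    (measurable_const.indicator (hDSm N σ))
  have hφint : ∀ σ, IntegrableOn (φ σ) D := by
    intro σ
    apply Integrable.mono' (g := fun _ => (1:ℝ))
    · exact integrableOn_const (C := (1:ℝ)) hDfin.ne
    · exact (hφm σ).aestronglyMeasurable
    · apply Filter.Eventually.of_forall
      intro x
      simp only [hφ, Real.norm_eq_abs]
      by_cases hx : x ∈ DS N σ
      · rw [Set.indicator_of_mem hx]; simp
      · rw [Set.indicator_of_notMem hx]; simp
  -- bound |M σ|
  have hMbd : ∀ (σ : Finset ℕ) (z : S), |M σ z| ≤ ‖(M σ).toBCF‖ := by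
    intro σ z
    have := (M σ).toBCF.norm_coe_le_norm z
    simpa [Real.norm_eq_abs] using this
  -- convergence for each σ
  have hconvσ : ∀ σ : Finset ℕ, Tendsto
      (fun h' => ∫⁻ x in D, (DS N σ).indicator (fun x => ENNReal.ofReal (M σ (u h' x))) x)
      atTop (𝓝 (∫⁻ x in D, (DS N σ).indicator (Jc σ) x)) := by
    intro σ
    have h3 := hconv (φ σ) (hφint σ) (M σ)
    have h4 := (ENNReal.continuous_ofReal.tendsto _).comp h3
    -- identify the terms
    have c1 : ∀ h', ENNReal.ofReal (∫ x in D, φ σ x * M σ (u h' x))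
        = ∫⁻ x in D, (DS N σ).indicator (fun x => ENNReal.ofReal (M σ (u h' x))) x := by
      intro h'
      have hint : Integrable (fun x => φ σ x * M σ (u h' x)) (volume.restrict D) := by
        apply Integrable.mono' (g := fun _ => ‖(M σ).toBCF‖)
        · exact integrableOn_const (C := ‖(M σ).toBCF‖) hDfin.ne
        · exact ((hφm σ).aemeasurable.mul
            ((M σ).continuous.measurable.comp_aemeasurable (hu h'))).aestronglyMeasurable
        · apply Filter.Eventually.of_forall
          intro x
          rw [Real.norm_eq_abs, abs_mul]
          calc |φ σ x| * |M σ (u h' x)| ≤ 1 * ‖(M σ).toBCF‖ := by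
                apply mul_le_mul _ (hMbd σ _) (abs_nonneg _) zero_le_one
                simp only [hφ]
                by_cases hx : x ∈ DS N σ
                · rw [Set.indicator_of_mem hx]; simp
                · rw [Set.indicator_of_notMem hx]; simp
            _ = ‖(M σ).toBCF‖ := one_mul _
      have hnn : 0 ≤ᵐ[volume.restrict D] (fun x => φ σ x * M σ (u h' x)) := by
        apply Filter.Eventually.of_forall
        intro x
        apply mul_nonneg _ (hM0 σ _)
        simp only [hφ]
        exact Set.indicator_nonneg (fun _ _ => zero_le_one) x
      rw [ofReal_integral_eq_lintegral_ofReal hint hnn]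
      apply lintegral_congr
      intro x
      by_cases hx : x ∈ DS N σ
      · simp only [hφ]
        rw [Set.indicator_of_mem hx, Set.indicator_of_mem hx, one_mul]
      · simp only [hφ]
        rw [Set.indicator_of_notMem hx, Set.indicator_of_notMem hx, zero_mul,
          ENNReal.ofReal_zero]
    have c2 : ENNReal.ofReal (∫ x in D, φ σ x * ∫ z, M σ z ∂(μ x))
        = ∫⁻ x in D, (DS N σ).indicator (Jc σ) x := by
      have hint : Integrable (fun x => φ σ x * ∫ z, M σ z ∂(μ x)) (volume.restrict D) := by
        apply Integrable.mono' (g := fun _ => ‖(M σ).toBCF‖)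
        · exact integrableOn_const (C := ‖(M σ).toBCF‖) hDfin.ne
        · exact ((hφm σ).aemeasurable.mul (hmeas2 (M σ))).aestronglyMeasurable
        · apply Filter.Eventually.of_forall
          intro x
          rw [Real.norm_eq_abs, abs_mul]
          have hIb : |∫ z, M σ z ∂(μ x)| ≤ ‖(M σ).toBCF‖ := by
            rw [← Real.norm_eq_abs]
            calc ‖∫ z, M σ z ∂(μ x)‖ ≤ ‖(M σ).toBCF‖ * ((μ x) Set.univ).toReal := by
                  apply norm_integral_le_of_norm_le_const
                  apply Filter.Eventually.of_forall
                  intro z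
                  rw [Real.norm_eq_abs]
                  exact hMbd σ z
              _ = ‖(M σ).toBCF‖ := by rw [(hprob x).measure_univ]; simp
          calc |φ σ x| * |∫ z, M σ z ∂(μ x)| ≤ 1 * ‖(M σ).toBCF‖ := by
                apply mul_le_mul _ hIb (abs_nonneg _) zero_le_one
                simp only [hφ]
                by_cases hx : x ∈ DS N σ
                · rw [Set.indicator_of_mem hx]; simp
                · rw [Set.indicator_of_notMem hx]; simp
            _ = ‖(M σ).toBCF‖ := one_mul _
      have hnn : 0 ≤ᵐ[volume.restrict D] (fun x => φ σ x * ∫ z, M σ z ∂(μ x)) := by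
        apply Filter.Eventually.of_forall
        intro x
        apply mul_nonneg _ (hMnn σ x)
        simp only [hφ]
        exact Set.indicator_nonneg (fun _ _ => zero_le_one) x
      rw [ofReal_integral_eq_lintegral_ofReal hint hnn]
      apply lintegral_congr
      intro x
      by_cases hx : x ∈ DS N σ
      · simp only [hφ]
        rw [Set.indicator_of_mem hx, Set.indicator_of_mem hx, one_mul, hJceq σ x]
      · simp only [hφ]
        rw [Set.indicator_of_notMem hx, Set.indicator_of_notMem hx, zero_mul,
          ENNReal.ofReal_zero]
    rw [← c2]
    apply h4.congr
    intro h'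
    exact c1 h'
  -- sum over σ
  have hsummed : Tendsto
      (fun h' => ∫⁻ x in D, ENNReal.ofReal (M (pat N x) (u h' x)))
      atTop (𝓝 (∫⁻ x in D, J N x)) := by
    have h5 := tendsto_finset_sum ((Finset.range N).powerset)
      (fun σ _ => hconvσ σ)
    have e3 : ∀ h', (∑ σ ∈ (Finset.range N).powerset,
        ∫⁻ x in D, (DS N σ).indicator (fun x => ENNReal.ofReal (M σ (u h' x))) x)
        = ∫⁻ x in D, ENNReal.ofReal (M (pat N x) (u h' x)) := by
      intro h'
      rw [← lintegral_finset_sum']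
      · apply lintegral_congr
        intro x
        exact (hdecomp N (fun σ x => ENNReal.ofReal (M σ (u h' x))) x).symm
      · intro σ _
        exact (ENNReal.measurable_ofReal.comp_aemeasurable
          ((M σ).continuous.measurable.comp_aemeasurable (hu h'))).indicator (hDSm N σ)
    have e4 : (∑ σ ∈ (Finset.range N).powerset,
        ∫⁻ x in D, (DS N σ).indicator (Jc σ) x) = ∫⁻ x in D, J N x := by
      rw [← lintegral_finset_sum']
      · apply lintegral_congr
        intro x
        exact (hdecomp N Jc x).symm
      · intro σ _
        exact (hJcm σ).indicator (hDSm N σ)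
    rw [← e4]
    apply h5.congr
    intro h'
    exact e3 h'
  -- conclude
  have hle : ∀ h', (∫⁻ x in D, ENNReal.ofReal (M (pat N x) (u h' x)))
      ≤ ∫⁻ x in D, ENNReal.ofReal (f x (u h' x)) :=
    fun h' => lintegral_mono_ae (hcomp_le N h')
  calc (∫⁻ x in D, J N x)
      = liminf (fun h' => ∫⁻ x in D, ENNReal.ofReal (M (pat N x) (u h' x))) atTop :=
        (hsummed.liminf_eq).symm
    _ ≤ liminf (fun h' => ∫⁻ x in D, ENNReal.ofReal (f x (u h' x))) atTop :=
        liminf_le_liminf (Filter.Eventually.of_forall hle)
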